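/- arXiv:2209.00634 — 2 statements merged into one kernel-verified Lean document; each statement's English description precedes it below -/
import Mathlib

section
/- The heavier-higher order on finitely supported subprobability distributions over a poset is a partial order: it is reflexive, transitive, and antisymmetric. -/
/-- An upwards-closed subset of a poset. -/
def UpClosed {X : Type*} [PartialOrder X] (U : Set X) : Prop :=
  ∀ ⦃x y : X⦄, x ∈ U → x ≤ y → y ∈ U

/-- A finitely supported subprobability distribution. -/
structure SubDist (X : Type*) where
  f : X → ℝ
  nonneg : ∀ x, 0 ≤ f x
  finsupp : (Function.support f).Finite
  mass_le : (∑ᶠ x, f x) ≤ 1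

/-- The heavier-higher order on (functions underlying) subdistributions. -/
def hhLE {X : Type*} [PartialOrder X] (f g : X → ℝ) : Prop :=
  ∀ U : Set X, UpClosed U → (∑ᶠ x ∈ U, f x) ≤ ∑ᶠ x ∈ U, g x

lemma split_point {X : Type*} [PartialOrder X] (f : X → ℝ)
    (hf : (Function.support f).Finite) (x : X) :
    (∑ᶠ y ∈ {y | x ≤ y}, f y) = f x + ∑ᶠ y ∈ {y | x < y}, f y := by
  have hset : {y | x ≤ y} = ({x} : Set X) ∪ {y | x < y} := by
    ext y; simp [le_iff_lt_or_eq, eq_comm, or_comm]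
  rw [hset, finsum_mem_union', finsum_mem_singleton]
  · rw [Set.disjoint_left]
    rintro y hy1 hy2
    simp only [Set.mem_singleton_iff] at hy1
    subst hy1
    exact lt_irrefl _ hy2
  · exact hf.subset Set.inter_subset_right
  · exact hf.subset Set.inter_subset_right

theorem hh_partialOrder {X : Type*} [PartialOrder X] :
    (∀ θ : SubDist X, hhLE θ.f θ.f) ∧
    (∀ θ₁ θ₂ θ₃ : SubDist X, hhLE θ₁.f θ₂.f → hhLE θ₂.f θ₃.f → hhLE θ₁.f θ₃.f) ∧
    (∀ θ₁ θ₂ : SubDist X, hhLE θ₁.f θ₂.f → hhLE θ₂.f θ₁.f → θ₁.f = θ₂.f) := by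
  refine ⟨fun θ U _ => le_refl _, fun θ₁ θ₂ θ₃ h12 h23 U hU => (h12 U hU).trans (h23 U hU), ?_⟩
  intro θ₁ θ₂ h12 h21
  funext x
  have hle : UpClosed {y | x ≤ y} := fun a b ha hab => le_trans ha hab
  have hlt : UpClosed {y | x < y} := fun a b ha hab => lt_of_lt_of_le ha hab
  have e1 : (∑ᶠ y ∈ {y | x ≤ y}, θ₁.f y) = ∑ᶠ y ∈ {y | x ≤ y}, θ₂.f y :=
    le_antisymm (h12 _ hle) (h21 _ hle)
  have e2 : (∑ᶠ y ∈ {y | x < y}, θ₁.f y) = ∑ᶠ y ∈ {y | x < y}, θ₂.f y :=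
    le_antisymm (h12 _ hlt) (h21 _ hlt)
  have s1 := split_point θ₁.f θ₁.finsupp x
  have s2 := split_point θ₂.f θ₂.finsupp x
  rw [s1, s2, e2] at e1
  linarith
end

section
/- In the convex algebra of subdistributions: for a subdistribution θ on X ∪ {x} written as θ = r·δ_x + θ' where θ'(x) = 0 and r < 1, the subdistribution θ'/(1−r) is the least fixed point (with respect to the heavier-higher order) of the map φ ↦ r·φ + θ' on subdistributions over X ∪ {x}; i.e., it satisfies r·(θ'/(1−r)) + θ' = θ'/(1−r), and it is below every φ satisfying r·φ + θ' ≤^{hh} φ. -/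
open Classical in
noncomputable def dirac {X : Type*} (x : X) : X → ℝ :=
  fun y => if y = x then 1 else 0

lemma finsum_mem_mul_left {X : Type*} (U : Set X) (r : ℝ) (f : X → ℝ)
    (hf : (Function.support f).Finite) :
    (∑ᶠ x ∈ U, r * f x) = r * ∑ᶠ x ∈ U, f x := by
  rw [finsum_mem_def, finsum_mem_def, mul_finsum _ _]
  congr 1
  ext y
  simp only [Set.indicator]
  split <;> simp

theorem conditioning_is_least_fixed_point {X : Type*} [PartialOrder X]
    (x : X) (r : ℝ) (hr0 : 0 ≤ r) (hr1 : r < 1)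
    (θ θ' : SubDist X) (hx : θ'.f x = 0)
    (hθ : θ.f = fun y => r * dirac x y + θ'.f y) :
    (∀ y, r * (θ'.f y / (1 - r)) + θ'.f y = θ'.f y / (1 - r)) ∧
    (∀ φ : SubDist X, hhLE (fun y => r * φ.f y + θ'.f y) φ.f →
      hhLE (fun y => θ'.f y / (1 - r)) φ.f) := by
  have h1r : (1 : ℝ) - r ≠ 0 := by linarith
  constructor
  · intro y
    field_simp
    ring
  · intro φ hφ U hU
    have key := hφ U hU
    have hsupθ' : (U ∩ Function.support θ'.f).Finite :=
      θ'.finsupp.subset Set.inter_subset_right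
    have hsupφ : (U ∩ Function.support φ.f).Finite :=
      φ.finsupp.subset Set.inter_subset_right
    have hsuprφ : (U ∩ Function.support fun y => r * φ.f y).Finite :=
      hsupφ.subset (Set.inter_subset_inter_right _ (by
        intro y hy; simp only [Function.mem_support] at *; intro h; apply hy; rw [h, mul_zero]))
    rw [finsum_mem_add_distrib' hsuprφ hsupθ',
        finsum_mem_mul_left U r φ.f φ.finsupp] at key
    have hdiv : (∑ᶠ y ∈ U, θ'.f y / (1 - r)) = (∑ᶠ y ∈ U, θ'.f y) / (1 - r) := by
      have := finsum_mem_mul_left U (1 / (1 - r)) θ'.f θ'.finsupp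
      simp only [one_div, ← div_eq_inv_mul] at this
      exact this
    rw [hdiv]
    rw [div_le_iff₀ (by linarith)]
    linarith
end
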